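/- Suppose f is L₁-smooth in x, G₂-Lipschitz in t, the optimal value f(x*(t);t) is G₂-Lipschitz in t, and β = 1/L₁. If at iteration T̄ the TVGD iterate x_{T̄} satisfies ‖∇ₓf(x_{T̄};t_{T̄})‖ ≤ 2√(L₁(1+G₂)h), then every subsequent iterate x_k (k ≥ T̄) either satisfies ‖∇ₓf(x_k;t_k)‖ ≤ 2√(L₁(1+G₂)h), or there exists l < k such that ‖∇ₓf(x_l;t_l)‖ ≤ 2√(L₁(1+G₂)h) and (f(x_k;t_k) − f_k*) < (f(x_l;t_l) − f_l*) + 2G₂h − (1/(2L₁))‖∇ₓf(x_l;t_l)‖². -/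

import Mathlib

open InnerProductSpace MeasureTheory
open scoped RealInnerProductSpace

section helpers
variable {E : Type*} [NormedAddCommGroup E] [InnerProductSpace ℝ E] [CompleteSpace E]

lemma tvgd_line_deriv {φ : E → ℝ} {G : E → E} (hφ : ∀ y, HasGradientAt φ (G y) y)
    (x v : E) (τ : ℝ) :
    HasDerivAt (fun s : ℝ => φ (x + s • v)) ⟪G (x + τ • v), v⟫_ℝ τ := by
  have h1 : HasDerivAt (fun s : ℝ => x + s • v) v τ := by
    simpa using ((hasDerivAt_id τ).smul_const v).const_add x
  have h2 := (hasGradientAt_iff_hasFDerivAt.mp (hφ (x + τ • v))).comp_hasDerivAt τ h1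
  simp [InnerProductSpace.toDual_apply_apply] at h2
  exact h2

lemma tvgd_taylor_abs {φ : E → ℝ} {G : E → E} {L : ℝ} (hL : 0 ≤ L)
    (hφ : ∀ y, HasGradientAt φ (G y) y)
    (hG : ∀ x y : E, ‖G x - G y‖ ≤ L * ‖x - y‖) (x v : E) :
    |φ (x + v) - φ x - ⟪G x, v⟫_ℝ| ≤ L / 2 * ‖v‖ ^ 2 := by
  have hcont : Continuous G := by
    have : LipschitzWith (Real.toNNReal L) G := by
      apply LipschitzWith.of_dist_le_mul
      intro a b
      simpa [dist_eq_norm, Real.coe_toNNReal L hL] using hG a b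
    exact this.continuous
  have hψ : Continuous fun τ : ℝ => ⟪G (x + τ • v), v⟫_ℝ :=
    (hcont.comp (by continuity)).inner continuous_const
  have hint : IntervalIntegrable (fun τ : ℝ => ⟪G (x + τ • v), v⟫_ℝ) volume 0 1 :=
    hψ.intervalIntegrable 0 1
  have heq : ∫ τ in (0:ℝ)..1, ⟪G (x + τ • v), v⟫_ℝ = φ (x + v) - φ x := by
    have := intervalIntegral.integral_eq_sub_of_hasDerivAt
      (f := fun s : ℝ => φ (x + s • v)) (fun τ _ => tvgd_line_deriv hφ x v τ) hint
    simpa using this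
  have key : |∫ τ in (0:ℝ)..1, (⟪G (x + τ • v), v⟫_ℝ - ⟪G x, v⟫_ℝ)| ≤ L / 2 * ‖v‖ ^ 2 := by
    have hbound : ∀ τ ∈ Set.Icc (0:ℝ) 1,
        |⟪G (x + τ • v), v⟫_ℝ - ⟪G x, v⟫_ℝ| ≤ L * ‖v‖ ^ 2 * τ := by
      intro τ hτ
      have h1 : |⟪G (x + τ • v) - G x, v⟫_ℝ| ≤ ‖G (x + τ • v) - G x‖ * ‖v‖ :=
        abs_real_inner_le_norm _ _
      have h2 : ‖G (x + τ • v) - G x‖ ≤ L * (τ * ‖v‖) := by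
        have := hG (x + τ • v) x
        simpa [norm_smul, abs_of_nonneg hτ.1] using this
      calc |⟪G (x + τ • v), v⟫_ℝ - ⟪G x, v⟫_ℝ| = |⟪G (x + τ • v) - G x, v⟫_ℝ| := by
            rw [inner_sub_left]
        _ ≤ ‖G (x + τ • v) - G x‖ * ‖v‖ := h1
        _ ≤ L * (τ * ‖v‖) * ‖v‖ := mul_le_mul_of_nonneg_right h2 (norm_nonneg v)
        _ = L * ‖v‖ ^ 2 * τ := by ring
    have habs : |∫ τ in (0:ℝ)..1, (⟪G (x + τ • v), v⟫_ℝ - ⟪G x, v⟫_ℝ)|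
        ≤ ∫ τ in (0:ℝ)..1, |⟪G (x + τ • v), v⟫_ℝ - ⟪G x, v⟫_ℝ| :=
      intervalIntegral.abs_integral_le_integral_abs (by norm_num)
    have hmono : (∫ τ in (0:ℝ)..1, |⟪G (x + τ • v), v⟫_ℝ - ⟪G x, v⟫_ℝ|)
        ≤ ∫ τ in (0:ℝ)..1, L * ‖v‖ ^ 2 * τ := by
      apply intervalIntegral.integral_mono_on (by norm_num)
      · exact ((hψ.sub continuous_const).abs).intervalIntegrable 0 1
      · exact ((continuous_const.mul continuous_id).intervalIntegrable 0 1)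
      · exact hbound
    have hval : (∫ τ in (0:ℝ)..1, L * ‖v‖ ^ 2 * τ) = L / 2 * ‖v‖ ^ 2 := by
      rw [intervalIntegral.integral_const_mul, integral_id]
      ring
    linarith [habs.trans (hmono.trans_eq hval)]
  have hsplit : ∫ τ in (0:ℝ)..1, (⟪G (x + τ • v), v⟫_ℝ - ⟪G x, v⟫_ℝ)
      = (φ (x + v) - φ x) - ⟪G x, v⟫_ℝ := by
    rw [intervalIntegral.integral_sub hint intervalIntegrable_const]
    simp [heq]
  rw [hsplit] at key
  exact key

lemma tvgd_taylor_le {φ : E → ℝ} {G : E → E} {L : ℝ} (hL : 0 ≤ L)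
    (hφ : ∀ y, HasGradientAt φ (G y) y)
    (hG : ∀ x y : E, ‖G x - G y‖ ≤ L * ‖x - y‖) (x v : E) :
    φ (x + v) ≤ φ x + ⟪G x, v⟫_ℝ + L / 2 * ‖v‖ ^ 2 := by
  have := (abs_le.mp (tvgd_taylor_abs hL hφ hG x v)).2
  linarith

lemma tvgd_taylor_ge {φ : E → ℝ} {G : E → E} {L : ℝ} (hL : 0 ≤ L)
    (hφ : ∀ y, HasGradientAt φ (G y) y)
    (hG : ∀ x y : E, ‖G x - G y‖ ≤ L * ‖x - y‖) (x v : E) :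
    φ x + ⟪G x, v⟫_ℝ - L / 2 * ‖v‖ ^ 2 ≤ φ (x + v) := by
  have := (abs_le.mp (tvgd_taylor_abs hL hφ hG x v)).1
  linarith

end helpers

set_option maxHeartbeats 1000000

/-- Theorem 2: once TVGD reaches a 2√(L₁(1+G₂)h)-stationary point, every later iterate is
either such a stationary point, or its optimality gap exceeds that at an earlier stationary
point by at most 2G₂h − (1/(2L₁))‖∇ₓf_l‖². -/
theorem stmt_3 {d : ℕ} (f : EuclideanSpace ℝ (Fin d) → ℝ → ℝ)
    (g : EuclideanSpace ℝ (Fin d) → ℝ → EuclideanSpace ℝ (Fin d))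
    (L₁ G₂ h : ℝ) (hL₁ : 0 < L₁) (hh : 0 < h) (hG₂ : 0 ≤ G₂)
    (hgrad : ∀ (t : ℝ) (x : EuclideanSpace ℝ (Fin d)),
      HasGradientAt (fun y => f y t) (g x t) x)
    (hlipg : ∀ (t : ℝ) (x y : EuclideanSpace ℝ (Fin d)),
      ‖g x t - g y t‖ ≤ L₁ * ‖x - y‖)
    (hlipt : ∀ (x : EuclideanSpace ℝ (Fin d)) (s t : ℝ),
      |f x s - f x t| ≤ G₂ * |s - t|)
    (fstar : ℝ → ℝ)
    (hopt : ∀ (t : ℝ) (x : EuclideanSpace ℝ (Fin d)), fstar t ≤ f x t)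
    (hattained : ∀ t : ℝ, ∃ x, f x t = fstar t)
    (hlipstar : ∀ s t : ℝ, |fstar s - fstar t| ≤ G₂ * |s - t|)
    (x : ℕ → EuclideanSpace ℝ (Fin d))
    (hupd : ∀ k : ℕ, x (k + 1) = x k - (1 / L₁) • g (x k) (k * h))
    (Tbar : ℕ)
    (hTbar : ‖g (x Tbar) (Tbar * h)‖ ≤ 2 * Real.sqrt (L₁ * (1 + G₂) * h)) :
    ∀ k : ℕ, Tbar ≤ k →
      ‖g (x k) (k * h)‖ ≤ 2 * Real.sqrt (L₁ * (1 + G₂) * h) ∨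
      ∃ l : ℕ, l < k ∧
        ‖g (x l) (l * h)‖ ≤ 2 * Real.sqrt (L₁ * (1 + G₂) * h) ∧
        f (x k) (k * h) - fstar (k * h) <
          f (x l) (l * h) - fstar (l * h) + 2 * G₂ * h -
            (1 / (2 * L₁)) * ‖g (x l) (l * h)‖ ^ 2 := by
  have hL₁' : (L₁ : ℝ) ≠ 0 := ne_of_gt hL₁
  have hL0 : (0:ℝ) ≤ L₁ := hL₁.le
  have Tle : ∀ (t : ℝ) (y v : EuclideanSpace ℝ (Fin d)),
      f (y + v) t ≤ f y t + ⟪g y t, v⟫_ℝ + L₁ / 2 * ‖v‖ ^ 2 :=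
    fun t y v => tvgd_taylor_le hL0 (fun z => hgrad t z) (fun a b => hlipg t a b) y v
  have Tge : ∀ (t : ℝ) (y v : EuclideanSpace ℝ (Fin d)),
      f y t + ⟪g y t, v⟫_ℝ - L₁ / 2 * ‖v‖ ^ 2 ≤ f (y + v) t :=
    fun t y v => tvgd_taylor_ge hL0 (fun z => hgrad t z) (fun a b => hlipg t a b) y v
  intro k hk
  induction k, hk using Nat.le_induction with
  | base => exact Or.inl hTbar
  | succ k hk IH =>
    set ε := 2 * Real.sqrt (L₁ * (1 + G₂) * h) with hεdef
    have hA0 : (0:ℝ) < L₁ * (1 + G₂) * h := by positivity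
    have hε0 : 0 < ε := by
      rw [hεdef]
      have := Real.sqrt_pos.mpr hA0
      linarith
    have hε2 : ε ^ 2 = 4 * (L₁ * (1 + G₂) * h) := by
      rw [hεdef, mul_pow, Real.sq_sqrt hA0.le]; ring
    by_cases hB : ‖g (x (k+1)) ((k+1 : ℕ) * h)‖ ≤ ε
    · exact Or.inl hB
    push_neg at hB
    -- time step facts
    have ht' : ((k+1 : ℕ) : ℝ) * h - (k : ℕ) * h = h := by push_cast; ring
    have habs : |((k+1 : ℕ) : ℝ) * h - ((k : ℕ) : ℝ) * h| = h := by
      rw [ht', abs_of_pos hh]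
    have lipt1 : ∀ y : EuclideanSpace ℝ (Fin d),
        f y ((k+1 : ℕ) * h) ≤ f y ((k : ℕ) * h) + G₂ * h := by
      intro y
      have h1 := hlipt y (((k+1 : ℕ) : ℝ) * h) (((k : ℕ) : ℝ) * h)
      rw [habs] at h1
      have := le_abs_self (f y (((k+1 : ℕ) : ℝ) * h) - f y (((k : ℕ) : ℝ) * h))
      linarith
    have hfs : fstar (((k : ℕ) : ℝ) * h) - G₂ * h ≤ fstar (((k+1 : ℕ) : ℝ) * h) := by
      have h1 := hlipstar (((k+1 : ℕ) : ℝ) * h) (((k : ℕ) : ℝ) * h)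
      rw [habs] at h1
      have := neg_abs_le (fstar (((k+1 : ℕ) : ℝ) * h) - fstar (((k : ℕ) : ℝ) * h))
      linarith
    -- abbreviations
    set gk := g (x k) ((k : ℕ) * h) with hgk_def
    set g' := g (x (k+1)) ((k : ℕ) * h) with hg'_def
    set gn := g (x (k+1)) ((k+1 : ℕ) * h) with hgn_def
    set a : ℝ := ⟪g', gk⟫_ℝ with ha_def
    set w := gn - g' with hw_def
    -- F4 : time-transfer with slack
    have F4 : f (x (k+1)) ((k+1 : ℕ) * h) ≤
        f (x (k+1)) ((k : ℕ) * h) + G₂ * h - 1/(4*L₁) * ‖w‖^2 := by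
      set u := (1/(2*L₁)) • w with hu_def
      have hinn : ⟪gn, u⟫_ℝ - ⟪g', u⟫_ℝ = 1/(2*L₁) * ‖w‖^2 := by
        rw [hu_def, real_inner_smul_right, real_inner_smul_right, ← mul_sub,
          ← inner_sub_left, ← hw_def, real_inner_self_eq_norm_sq]
      have hnu : ‖u‖^2 = (1/(2*L₁))^2 * ‖w‖^2 := by
        rw [hu_def, norm_smul, mul_pow, Real.norm_eq_abs, sq_abs]
      have A1 := Tge ((k+1 : ℕ) * h) (x (k+1)) u
      have A2 := Tle ((k : ℕ) * h) (x (k+1)) u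
      have A3 := lipt1 (x (k+1) + u)
      rw [← hgn_def] at A1
      rw [← hg'_def] at A2
      have hfi : L₁ * ((1/(2*L₁))^2 * ‖w‖^2) - 1/(2*L₁) * ‖w‖^2 = - (1/(4*L₁) * ‖w‖^2) := by
        field_simp; ring
      nlinarith [A1, A2, A3, hinn, hnu, hfi]
    -- F3 : strengthened descent
    have hxd : x (k+1) - x k = -((1/L₁) • gk) := by rw [hupd k, ← hgk_def]; abel
    have F3 : f (x (k+1)) ((k : ℕ) * h) ≤
        f (x k) ((k : ℕ) * h) - 1/(2*L₁) * ‖gk‖^2 - (3/16) * a^2 / (L₁ * ‖gk‖^2) := by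
      by_cases hgk0 : gk = 0
      · have hx1 : x (k+1) = x k := by
          rw [hupd k, ← hgk_def, hgk0, smul_zero, sub_zero]
        have ha0 : a = 0 := by rw [ha_def, hgk0, inner_zero_right]
        rw [hx1, hgk0, ha0]
        norm_num
      · have hB0 : 0 < ‖gk‖^2 := pow_pos (norm_pos_iff.mpr hgk0) 2
        set s : ℝ := a / (4 * ‖gk‖^2) with hs_def
        have hz : x (k+1) + (s/L₁) • gk = x k + (-(1-s)/L₁) • gk := by
          have : x (k+1) = x k - (1/L₁) • gk := by
            have := hxd; rw [sub_eq_iff_eq_add] at this; rw [this]; abel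
          rw [this]
          rw [sub_eq_add_neg, add_assoc, ← neg_smul, ← add_smul]
          congr 2
          field_simp
          ring
        have T1 := Tle ((k : ℕ) * h) (x k) ((-(1-s)/L₁) • gk)
        have T2 := Tge ((k : ℕ) * h) (x (k+1)) ((s/L₁) • gk)
        rw [hz] at T2
        rw [← hgk_def] at T1
        rw [← hg'_def] at T2
        have hi1 : ⟪gk, (-(1-s)/L₁) • gk⟫_ℝ = (-(1-s)/L₁) * ‖gk‖^2 := by
          rw [real_inner_smul_right, real_inner_self_eq_norm_sq]
        have hi2 : ⟪g', (s/L₁) • gk⟫_ℝ = (s/L₁) * a := by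
          rw [real_inner_smul_right, ← ha_def]
        have hn1 : ‖(-(1-s)/L₁) • gk‖^2 = ((1-s)/L₁)^2 * ‖gk‖^2 := by
          rw [norm_smul, mul_pow, Real.norm_eq_abs, sq_abs]
          congr 1
          rw [neg_div, neg_sq]
        have hn2 : ‖(s/L₁) • gk‖^2 = (s/L₁)^2 * ‖gk‖^2 := by
          rw [norm_smul, mul_pow, Real.norm_eq_abs, sq_abs]
        have halg : (-(1-s)/L₁) * ‖gk‖^2 + L₁/2 * (((1-s)/L₁)^2 * ‖gk‖^2)
            + L₁/2 * ((s/L₁)^2 * ‖gk‖^2) - (s/L₁) * a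
            = - (1/(2*L₁) * ‖gk‖^2) - (3/16) * a^2 / (L₁ * ‖gk‖^2) := by
          have hBne : ‖gk‖^2 ≠ 0 := ne_of_gt hB0
          rw [hs_def]
          field_simp
          ring
        rw [hi1, hn1] at T1
        rw [hi2, hn2] at T2
        linarith [T1, T2, halg.le, halg.ge]
    -- slack nonnegativity
    have hslack2 : 0 ≤ (3/16) * a^2 / (L₁ * ‖gk‖^2) := by positivity
    by_cases hA : ‖gk‖ ≤ ε
    · -- case B1 : previous iterate stationary, use l = k
      right
      refine ⟨k, Nat.lt_succ_self k, hA, ?_⟩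
      have hδ : 0 < 1/(4*L₁) * ‖w‖^2 + (3/16) * a^2 / (L₁ * ‖gk‖^2) := by
        by_cases ha0 : a = 0
        · -- then g' = 0 and w = gn with ‖gn‖ > ε > 0
          have hlip : ‖g' - gk‖ ≤ ‖gk‖ := by
            have h1 := hlipg ((k : ℕ) * h) (x (k+1)) (x k)
            rw [← hg'_def, ← hgk_def, hxd] at h1
            calc ‖g' - gk‖ ≤ L₁ * ‖-((1/L₁) • gk)‖ := h1
              _ = ‖gk‖ := by
                rw [norm_neg, norm_smul, Real.norm_eq_abs, abs_of_pos (by positivity : (0:ℝ) < 1/L₁)]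
                field_simp
          have hsq : ‖g' - gk‖^2 ≤ ‖gk‖^2 := by
            nlinarith [norm_nonneg (g' - gk), norm_nonneg gk]
          have hexp : ‖g' - gk‖^2 = ‖g'‖^2 - 2*a + ‖gk‖^2 := by
            rw [norm_sub_sq_real, ← ha_def]
          have hg'0 : g' = 0 := by
            have : ‖g'‖^2 ≤ 0 := by rw [hexp] at hsq; rw [ha0] at hsq; linarith
            have := norm_nonneg g'
            have hn0 : ‖g'‖ = 0 := by nlinarith
            exact norm_eq_zero.mp hn0
          have hwgn : w = gn := by rw [hw_def, hg'0, sub_zero]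
          have hwpos : 0 < ‖w‖ := by rw [hwgn]; linarith
          have : 0 < 1/(4*L₁) * ‖w‖^2 := by positivity
          linarith
        · have : 0 < (3/16) * a^2 / (L₁ * ‖gk‖^2) := by
            have hgk0 : gk ≠ 0 := by
              intro hc
              apply ha0
              rw [ha_def, hc, inner_zero_right]
            have hBpos : 0 < ‖gk‖ := norm_pos_iff.mpr hgk0
            positivity
          have : 0 ≤ 1/(4*L₁) * ‖w‖^2 := by positivity
          linarith
      linarith [F3, F4, hfs]
    · -- case B2 : previous iterate also non-stationary, reuse earlier l
      rcases IH with hIH | ⟨l, hlk, hgl, hbound⟩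
      · exact absurd hIH hA
      right
      refine ⟨l, Nat.lt_succ_of_lt hlk, hgl, ?_⟩
      push_neg at hA
      have hgk2 : ε^2 < ‖gk‖^2 := by nlinarith [norm_nonneg gk]
      have hkey : 2 * G₂ * h + 2 * h ≤ 1/(2*L₁) * ‖gk‖^2 := by
        have h1 : 1/(2*L₁) * ε^2 = 2 * (1 + G₂) * h := by
          rw [hε2]; field_simp; ring
        have h2 : 1/(2*L₁) * ε^2 ≤ 1/(2*L₁) * ‖gk‖^2 := by
          apply mul_le_mul_of_nonneg_left hgk2.le (by positivity)
        linarith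
      have hwn : 0 ≤ 1/(4*L₁) * ‖w‖^2 := by positivity
      linarith [F3, F4, hfs, hbound]
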